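/- Let $a^l, a^u, u, v \in \mathbb{R}^n$ with $a^l \le a^u$, $v > 0$, $u \ge 0$, and $f, g \in \mathbb{R}$. Define $\varphi(z) = \sum_{j=1}^n (z - u_j/v_j)\, v_j\, c_j(z) + f - gz$ with $c_j(z) = a^u_j$ if $u_j/v_j \le z$ and $c_j(z) = a^l_j$ otherwise. Then $\varphi$ is convex on $\mathbb{R}$. -/

import Mathlib

lemma aff_convex (a b : ℝ) : ConvexOn ℝ Set.univ (fun z : ℝ => a * z + b) := by
  refine ⟨convex_univ, fun x _ y _ p q hp hq hpq => ?_⟩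
  simp only [smul_eq_mul]
  apply le_of_eq
  linear_combination -b * hpq

lemma sum_convex {ι : Type*} (s : Finset ι) (F : ι → ℝ → ℝ)
    (h : ∀ i ∈ s, ConvexOn ℝ Set.univ (F i)) :
    ConvexOn ℝ Set.univ (fun z => ∑ i ∈ s, F i z) := by
  classical
  induction s using Finset.induction with
  | empty => simpa using convexOn_const (0 : ℝ) convex_univ
  | insert _ _ hni ih =>
    simp only [Finset.sum_insert hni]
    exact (h _ (Finset.mem_insert_self _ _)).add
      (ih fun i hi => h i (Finset.mem_insert_of_mem hi))

lemma term_convex (t w A a : ℝ) (hw : 0 < w) (hAa : a ≤ A) :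
    ConvexOn ℝ Set.univ (fun z : ℝ => (z - t) * w * (if t ≤ z then A else a)) := by
  have h : (fun z : ℝ => (z - t) * w * (if t ≤ z then A else a)) =
      fun z : ℝ => max ((w * a) * z + (-(w * a * t))) ((w * A) * z + (-(w * A * t))) := by
    funext z
    by_cases hz : t ≤ z
    · have hle : w * a * z + -(w * a * t) ≤ w * A * z + -(w * A * t) := by
        nlinarith [mul_nonneg (mul_nonneg hw.le (sub_nonneg.2 hAa)) (sub_nonneg.2 hz)]
      rw [if_pos hz, max_eq_right hle]; ring
    · have hle : w * A * z + -(w * A * t) ≤ w * a * z + -(w * a * t) := by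
        nlinarith [mul_nonneg (mul_nonneg hw.le (sub_nonneg.2 hAa))
          (sub_nonneg.2 (le_of_lt (lt_of_not_ge hz)))]
      rw [if_neg hz, max_eq_left hle]; ring
  rw [h]
  exact (aff_convex _ _).sup (aff_convex _ _)

theorem stmt_10 (n : ℕ) (al au u v : Fin n → ℝ)
    (hA : al ≤ au) (hv : ∀ j, 0 < v j) (hu : 0 ≤ u) (f g : ℝ) :
    ConvexOn ℝ Set.univ (fun z : ℝ =>
      (∑ j, (z - u j / v j) * v j * (if u j / v j ≤ z then au j else al j)) + f - g * z) := by
  have hsum : ConvexOn ℝ Set.univ (fun z : ℝ =>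
      ∑ j, (z - u j / v j) * v j * (if u j / v j ≤ z then au j else al j)) :=
    sum_convex _ _ fun j _ => term_convex _ _ _ _ (hv j) (hA j)
  have h := hsum.add (aff_convex (-g) f)
  convert h using 1
  · rfl
  funext z
  simp only [Pi.add_apply]
  ring
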